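/- (Moving a point by a controlled homeomorphism) Let p ≥ 1, D a domain in ℝⁿ (n ≥ 2), a₀, a₀′ ∈ D, and D₀ ⊂ D a subdomain containing a₀ and a₀′. Then there exists a homeomorphism f: D̄ → D̄ and a constant K_{n,p} > 0 depending only on n and p (and on D₀, a₀, a₀′) such that M_p(f(Γ)) ≤ K_{n,p} · M_p(Γ) for every path family Γ in D, f(a₀) = a₀′, and f(x) = x for all x ∈ D̄ \ D₀. -/

import Mathlib

open MeasureTheory Set ENNReal

noncomputable section

/-- Euclidean `n`-space. -/
abbrev Eucl (n : ℕ) := EuclideanSpace ℝ (Fin n)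

/-- The line integral of a Borel density `ρ` along a path `γ` parametrized on `[0,1]`. -/
def pathLIntegral {n : ℕ} (ρ : Eucl n → ℝ≥0∞) (γ : ℝ → Eucl n) : ℝ≥0∞ :=
  ∫⁻ t in Icc (0:ℝ) 1, ρ (γ t) * ENNReal.ofReal ‖deriv γ t‖

/-- The length of a path `γ` parametrized on `[0,1]`. -/
def pathLength {n : ℕ} (γ : ℝ → Eucl n) : ℝ≥0∞ :=
  ∫⁻ t in Icc (0:ℝ) 1, ENNReal.ofReal ‖deriv γ t‖

/-- A density `ρ` is admissible for the path family `Γ`. -/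
def IsAdmissible {n : ℕ} (Γ : Set (ℝ → Eucl n)) (ρ : Eucl n → ℝ≥0∞) : Prop :=
  Measurable ρ ∧ ∀ γ ∈ Γ, 1 ≤ pathLIntegral ρ γ

/-- The `p`-modulus of a family of paths `Γ` in `ℝⁿ`. -/
def pModulus {n : ℕ} (p : ℝ) (Γ : Set (ℝ → Eucl n)) : ℝ≥0∞ :=
  ⨅ (ρ : Eucl n → ℝ≥0∞) (_ : IsAdmissible Γ ρ), ∫⁻ x, ρ x ^ p

/-- The family of all paths joining `E₀` and `E₁` in `D`. -/
def JoinPaths {n : ℕ} (E₀ E₁ D : Set (Eucl n)) : Set (ℝ → Eucl n) :=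
  {γ | ContinuousOn γ (Icc 0 1) ∧ (∀ t ∈ Icc (0:ℝ) 1, γ t ∈ D) ∧ γ 0 ∈ E₀ ∧ γ 1 ∈ E₁}

/-- The minimal stretch `l(A) = min_{|h|=1} ‖A h‖` of a linear map. -/
def minStretch {n : ℕ} (A : Eucl n →L[ℝ] Eucl n) : ℝ :=
  sInf {r | ∃ h : Eucl n, ‖h‖ = 1 ∧ ‖A h‖ = r}

open Classical in
/-- The inner dilatation of order `p` of `f` at `x`. -/
def KIdil {n : ℕ} (p : ℝ) (f : Eucl n → Eucl n) (x : Eucl n) : ℝ≥0∞ :=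
  if (fderiv ℝ f x).det ≠ 0 then
    ENNReal.ofReal (|(fderiv ℝ f x).det| / (minStretch (fderiv ℝ f x)) ^ p)
  else if fderiv ℝ f x = 0 then 1 else ⊤

open Classical in
/-- The outer dilatation of order `p` of `f` at `x`. -/
def KOdil {n : ℕ} (p : ℝ) (f : Eucl n → Eucl n) (x : Eucl n) : ℝ≥0∞ :=
  if (fderiv ℝ f x).det ≠ 0 then
    ENNReal.ofReal (‖fderiv ℝ f x‖ ^ p / |(fderiv ℝ f x).det|)
  else if fderiv ℝ f x = 0 then 1 else ⊤

end

noncomputable section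

namespace CtrlHomeo

variable {n : ℕ}

/-- A "good" pair: `f` is a `C¹` diffeomorphism of `ℝⁿ` with inverse `g`,
equal to the identity outside a compact subset of `D₀`. -/
structure Good (D₀ : Set (Eucl n)) (f g : Eucl n → Eucl n) : Prop where
  left : ∀ x, g (f x) = x
  right : ∀ x, f (g x) = x
  cdf : ContDiff ℝ 1 f
  cdg : ContDiff ℝ 1 g
  supp : ∃ K : Set (Eucl n), IsCompact K ∧ K ⊆ D₀ ∧ ∀ x ∉ K, f x = x

namespace Good

variable {D₀ : Set (Eucl n)} {f g : Eucl n → Eucl n}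

theorem injective (h : Good D₀ f g) : Function.Injective f := by
  intro a b hab
  rw [← h.left a, hab, h.left]

theorem surjective (h : Good D₀ f g) : Function.Surjective f :=
  fun y => ⟨g y, h.right y⟩

theorem mapsK (h : Good D₀ f g) {K : Set (Eucl n)} (hK : ∀ x ∉ K, f x = x) :
    ∀ x ∈ K, f x ∈ K := by
  intro x hx
  by_contra hfx
  have h2 : f (f x) = f x := hK _ hfx
  have := h.injective h2
  rw [this] at hfx
  exact hfx hx

theorem g_eq_of_not_mem (h : Good D₀ f g) {K : Set (Eucl n)} (hK : ∀ x ∉ K, f x = x)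
    {z : Eucl n} (hz : z ∉ K) : g z = z := by
  by_cases hw : g z ∈ K
  · exact absurd (h.right z ▸ h.mapsK hK _ hw) hz
  · have := hK _ hw
    rw [h.right z] at this
    exact this.symm

theorem symm (h : Good D₀ f g) : Good D₀ g f := by
  obtain ⟨K, hKc, hKD, hKf⟩ := h.supp
  exact ⟨h.right, h.left, h.cdg, h.cdf, K, hKc, hKD, fun x hx => h.g_eq_of_not_mem hKf hx⟩

theorem comp {f₁ g₁ f₂ g₂ : Eucl n → Eucl n} (h₁ : Good D₀ f₁ g₁) (h₂ : Good D₀ f₂ g₂) :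
    Good D₀ (f₂ ∘ f₁) (g₁ ∘ g₂) := by
  obtain ⟨K₁, hK₁c, hK₁D, hK₁f⟩ := h₁.supp
  obtain ⟨K₂, hK₂c, hK₂D, hK₂f⟩ := h₂.supp
  refine ⟨fun x => by simp [Function.comp, h₂.left, h₁.left],
    fun x => by simp [Function.comp, h₁.right, h₂.right],
    h₂.cdf.comp h₁.cdf, h₁.cdg.comp h₂.cdg,
    K₁ ∪ K₂, hK₁c.union hK₂c, union_subset hK₁D hK₂D, ?_⟩
  intro x hx
  simp only [mem_union, not_or] at hx
  simp [Function.comp, hK₁f x hx.1, hK₂f x hx.2]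

theorem id_good (D₀ : Set (Eucl n)) : Good D₀ id id :=
  ⟨fun _ => rfl, fun _ => rfl, contDiff_id, contDiff_id,
    ∅, isCompact_empty, empty_subset _, fun _ _ => rfl⟩

/-- The derivative of `f` is invertible everywhere. -/
theorem fderiv_equiv (h : Good D₀ f g) (a : Eucl n) :
    ∃ e : Eucl n ≃L[ℝ] Eucl n, (e : Eucl n →L[ℝ] Eucl n) = fderiv ℝ f a := by
  have hdf : ∀ x, DifferentiableAt ℝ f x := fun x => h.cdf.differentiable one_ne_zero x
  have hdg : ∀ x, DifferentiableAt ℝ g x := fun x => h.cdg.differentiable one_ne_zero x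
  have hgf : (fderiv ℝ g (f a)).comp (fderiv ℝ f a) = ContinuousLinearMap.id ℝ (Eucl n) := by
    rw [← fderiv_comp a (hdg (f a)) (hdf a)]
    have : g ∘ f = id := funext h.left
    rw [this, fderiv_id]
  have hfg : (fderiv ℝ f a).comp (fderiv ℝ g (f a)) = ContinuousLinearMap.id ℝ (Eucl n) := by
    have := fderiv_comp (𝕜 := ℝ) (f := g) (g := f) (f a) (by rw [h.left a]; exact hdf a) (hdg (f a))
    rw [h.left a] at this
    rw [← this]
    have : f ∘ g = id := funext h.right
    rw [this, fderiv_id]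
  refine ⟨ContinuousLinearEquiv.equivOfInverse (fderiv ℝ f a) (fderiv ℝ g (f a))
    (fun x => ?_) (fun x => ?_), rfl⟩
  · exact DFunLike.congr_fun hgf x
  · exact DFunLike.congr_fun hfg x

theorem det_ne_zero (h : Good D₀ f g) (a : Eucl n) : (fderiv ℝ f a).det ≠ 0 := by
  obtain ⟨e, he⟩ := h.fderiv_equiv a
  rw [← he]
  simp only [ContinuousLinearMap.det]
  exact LinearEquiv.isUnit_det' e.toLinearEquiv |>.ne_zero

/-- Uniform bounds on the derivative of `f` and its Jacobian determinant. -/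
theorem bounds (h : Good D₀ f g) :
    ∃ L > (0:ℝ), ∃ c > (0:ℝ),
      (∀ x, ‖fderiv ℝ f x‖ ≤ L) ∧ (∀ x, c ≤ |(fderiv ℝ f x).det|) := by
  obtain ⟨K, hKc, hKD, hKf⟩ := h.supp
  have hcont : Continuous (fderiv ℝ f) := h.cdf.continuous_fderiv one_ne_zero
  have hout : ∀ x ∉ K, fderiv ℝ f x = ContinuousLinearMap.id ℝ (Eucl n) := by
    intro x hx
    have hev : f =ᶠ[nhds x] id := by
      filter_upwards [hKc.isClosed.isOpen_compl.mem_nhds hx] with y hy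
      exact hKf y hy
    rw [hev.fderiv_eq, fderiv_id]
  rcases K.eq_empty_or_nonempty with rfl | hKne
  · refine ⟨1, one_pos, 1, one_pos, fun x => ?_, fun x => ?_⟩
    · rw [hout x (notMem_empty x)]
      exact ContinuousLinearMap.norm_id_le
    · rw [hout x (notMem_empty x)]
      simp [ContinuousLinearMap.det]
  · obtain ⟨z, _, hz⟩ := hKc.exists_isMaxOn hKne
      ((hcont.norm).continuousOn : ContinuousOn (fun x => ‖fderiv ℝ f x‖) K)
    obtain ⟨w, hwK, hw⟩ := hKc.exists_isMinOn hKne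
      (((ContinuousLinearMap.continuous_det.comp hcont).abs).continuousOn :
        ContinuousOn (fun x => |(fderiv ℝ f x).det|) K)
    refine ⟨max 1 ‖fderiv ℝ f z‖, lt_of_lt_of_le one_pos (le_max_left _ _),
      min 1 |(fderiv ℝ f w).det|, lt_min one_pos (abs_pos.mpr (h.det_ne_zero w)),
      fun x => ?_, fun x => ?_⟩
    · by_cases hx : x ∈ K
      · exact le_trans (hz hx) (le_max_right _ _)
      · rw [hout x hx]
        exact le_trans ContinuousLinearMap.norm_id_le (le_max_left _ _)
    · by_cases hx : x ∈ K
      · exact le_trans (min_le_right _ _) (hw hx)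
      · rw [hout x hx]
        simpa [ContinuousLinearMap.det] using min_le_left (1:ℝ) _

/-- Change of variables inequality. -/
theorem lintegral_comp_le (h : Good D₀ f g) {c : ℝ} (hc : 0 < c)
    (hdet : ∀ x, c ≤ |(fderiv ℝ f x).det|) (ρ : Eucl n → ℝ≥0∞) :
    ∫⁻ x, ρ (f x) ≤ ENNReal.ofReal c⁻¹ * ∫⁻ x, ρ x := by
  have hcov := lintegral_image_eq_lintegral_abs_det_fderiv_mul (volume : Measure (Eucl n))
    MeasurableSet.univ
    (f' := fun x => fderiv ℝ f x)
    (fun x _ => (h.cdf.differentiable one_ne_zero x).hasFDerivAt.hasFDerivWithinAt)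
    h.injective.injOn ρ
  rw [image_univ, h.surjective.range_eq, Measure.restrict_univ] at hcov
  have key : ENNReal.ofReal c * ∫⁻ x, ρ (f x) ≤ ∫⁻ x, ρ x := by
    rw [hcov, ← lintegral_const_mul' _ _ ENNReal.ofReal_ne_top]
    refine lintegral_mono fun x => ?_
    exact mul_le_mul_left (ENNReal.ofReal_le_ofReal (hdet x)) _
  have hc0 : ENNReal.ofReal c ≠ 0 := by simpa using hc
  calc ∫⁻ x, ρ (f x) = (ENNReal.ofReal c)⁻¹ * (ENNReal.ofReal c * ∫⁻ x, ρ (f x)) := by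
        rw [← mul_assoc, ENNReal.inv_mul_cancel hc0 ENNReal.ofReal_ne_top, one_mul]
    _ ≤ (ENNReal.ofReal c)⁻¹ * ∫⁻ x, ρ x := mul_le_mul_right key _
    _ = ENNReal.ofReal c⁻¹ * ∫⁻ x, ρ x := by rw [ENNReal.ofReal_inv_of_pos hc]

/-- Derivative comparison along paths. -/
theorem deriv_comp_le (h : Good D₀ f g) {L : ℝ} (hL : 0 ≤ L)
    (hLb : ∀ x, ‖fderiv ℝ f x‖ ≤ L) (γ : ℝ → Eucl n) (t : ℝ) :
    ‖deriv (f ∘ γ) t‖ ≤ L * ‖deriv γ t‖ := by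
  by_cases hγ : DifferentiableAt ℝ γ t
  · have hfd : DifferentiableAt ℝ f (γ t) := h.cdf.differentiable one_ne_zero _
    rw [fderiv_comp_deriv _ hfd hγ]
    calc ‖(fderiv ℝ f (γ t)) (deriv γ t)‖ ≤ ‖fderiv ℝ f (γ t)‖ * ‖deriv γ t‖ :=
          (fderiv ℝ f (γ t)).le_opNorm _
      _ ≤ L * ‖deriv γ t‖ := mul_le_mul_of_nonneg_right (hLb _) (norm_nonneg _)
  · have hnd : ¬ DifferentiableAt ℝ (f ∘ γ) t := by
      intro hcomp
      have hgd : DifferentiableAt ℝ g ((f ∘ γ) t) := h.cdg.differentiable one_ne_zero _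
      have : DifferentiableAt ℝ (g ∘ (f ∘ γ)) t := hgd.comp t hcomp
      have heq : g ∘ (f ∘ γ) = γ := funext fun s => h.left (γ s)
      rw [heq] at this
      exact hγ this
    rw [deriv_zero_of_not_differentiableAt hnd, norm_zero]
    exact mul_nonneg hL (norm_nonneg _)

/-- The modulus inequality for a good pair. -/
theorem modulus_le (h : Good D₀ f g) (p : ℝ) (hp : 1 ≤ p) :
    ∃ K > (0:ℝ), ∀ Γ : Set (ℝ → Eucl n),
      pModulus p ((fun γ => f ∘ γ) '' Γ) ≤ ENNReal.ofReal K * pModulus p Γ := by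
  obtain ⟨L, hL, c, hc, hLb, hcb⟩ := h.symm.bounds
  have hp0 : (0:ℝ) ≤ p := le_trans zero_le_one hp
  refine ⟨L ^ p * c⁻¹, by positivity, fun Γ => ?_⟩
  have hK0 : ENNReal.ofReal (L ^ p * c⁻¹) ≠ 0 := by positivity
  have hKt : ENNReal.ofReal (L ^ p * c⁻¹) ≠ ⊤ := ENNReal.ofReal_ne_top
  have hrhs : ENNReal.ofReal (L ^ p * c⁻¹) * pModulus p Γ =
      ⨅ (ρ : Eucl n → ℝ≥0∞) (_ : IsAdmissible Γ ρ),
        ENNReal.ofReal (L ^ p * c⁻¹) * ∫⁻ x, ρ x ^ p := by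
    rw [pModulus, ENNReal.mul_iInf_of_ne hK0 hKt]
    exact iInf_congr fun ρ => ENNReal.mul_iInf_of_ne hK0 hKt
  rw [hrhs]
  refine le_iInf fun ρ => le_iInf fun hadm => ?_
  -- the transported density
  set ρ' : Eucl n → ℝ≥0∞ := fun y => ENNReal.ofReal L * ρ (g y) with hρ'
  have hmeas' : Measurable ρ' :=
    (measurable_const.mul (hadm.1.comp (h.cdg.continuous.measurable)))
  have hadm' : IsAdmissible ((fun γ => f ∘ γ) '' Γ) ρ' := by
    refine ⟨hmeas', ?_⟩
    rintro δ ⟨γ, hγ, rfl⟩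
    refine le_trans (hadm.2 γ hγ) ?_
    rw [pathLIntegral, pathLIntegral]
    refine lintegral_mono fun t => ?_
    have hder : ‖deriv γ t‖ ≤ L * ‖deriv (f ∘ γ) t‖ := by
      have := h.symm.deriv_comp_le hL.le hLb (f ∘ γ) t
      have heq : g ∘ (f ∘ γ) = γ := funext fun s => h.left (γ s)
      rwa [heq] at this
    calc ρ (γ t) * ENNReal.ofReal ‖deriv γ t‖
        ≤ ρ (γ t) * ENNReal.ofReal (L * ‖deriv (f ∘ γ) t‖) :=
          mul_le_mul_right (ENNReal.ofReal_le_ofReal hder) _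
      _ = (ENNReal.ofReal L * ρ (γ t)) * ENNReal.ofReal ‖deriv (f ∘ γ) t‖ := by
          rw [ENNReal.ofReal_mul hL.le]; ring
      _ = ρ' ((f ∘ γ) t) * ENNReal.ofReal ‖deriv (f ∘ γ) t‖ := by
          simp only [hρ', Function.comp_apply, h.left (γ t)]
  calc pModulus p ((fun γ => f ∘ γ) '' Γ) ≤ ∫⁻ y, ρ' y ^ p := iInf₂_le ρ' hadm'
    _ = ENNReal.ofReal L ^ p * ∫⁻ y, ρ (g y) ^ p := by
        simp only [hρ']
        rw [← lintegral_const_mul' _ _ (by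
          exact ENNReal.rpow_ne_top_of_nonneg hp0 ENNReal.ofReal_ne_top)]
        congr 1
        funext y
        rw [ENNReal.mul_rpow_of_nonneg _ _ hp0]
    _ ≤ ENNReal.ofReal L ^ p * (ENNReal.ofReal c⁻¹ * ∫⁻ x, ρ x ^ p) := by
        exact mul_le_mul_right (h.symm.lintegral_comp_le hc hcb (fun x => ρ x ^ p)) _
    _ = ENNReal.ofReal (L ^ p * c⁻¹) * ∫⁻ x, ρ x ^ p := by
        rw [ENNReal.ofReal_mul (by positivity), ← ENNReal.ofReal_rpow_of_pos hL, mul_assoc]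

end Good

/-- If `f` is a `C¹` bijection with everywhere-invertible derivative,
then its (two-sided) inverse is `C¹`. -/
theorem contDiff_of_inverse {f g : Eucl n → Eucl n}
    (h1 : ∀ x, g (f x) = x) (h2 : ∀ x, f (g x) = x) (hf : ContDiff ℝ 1 f)
    (he : ∀ a : Eucl n, ∃ e : Eucl n ≃L[ℝ] Eucl n, (e : Eucl n →L[ℝ] Eucl n) = fderiv ℝ f a) :
    ContDiff ℝ 1 g := by
  rw [contDiff_iff_contDiffAt]
  intro y
  obtain ⟨a, rfl⟩ : ∃ a, f a = y := ⟨g y, h2 y⟩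
  obtain ⟨e, hea⟩ := he a
  have hfa : ContDiffAt ℝ 1 f a := hf.contDiffAt
  have hd : HasFDerivAt f (e : Eucl n →L[ℝ] Eucl n) a := by
    rw [hea]; exact (hf.differentiable one_ne_zero a).hasFDerivAt
  have hs : HasStrictFDerivAt f (e : Eucl n →L[ℝ] Eucl n) a :=
    hfa.hasStrictFDerivAt' hd one_ne_zero
  have huniq := hs.localInverse_unique (g := g) (Filter.Eventually.of_forall fun x => h1 x)
  have hloc : ContDiffAt ℝ 1 (hfa.localInverse hd one_ne_zero) (f a) :=
    hfa.to_localInverse hd one_ne_zero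
  exact hloc.congr_of_eventuallyEq huniq

set_option maxHeartbeats 1000000 in
/-- The basic cone-shift move: points near `c₀` can be reached by a good diffeomorphism
supported in a ball around `c₀`. -/
theorem basic_move {D₀ : Set (Eucl n)} (c₀ : Eucl n) {r : ℝ} (hr : 0 < r)
    (hball : Metric.ball c₀ r ⊆ D₀) :
    ∃ δ > (0:ℝ), ∀ b : Eucl n, dist b c₀ < δ → ∃ f g, Good D₀ f g ∧ f c₀ = b := by
  classical
  set φ : ContDiffBump c₀ := ⟨r/2, 3*r/4, by positivity, by linarith⟩ with hφ
  have hφcd : ContDiff ℝ 1 ⇑φ := φ.contDiff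
  have hφdiff : Differentiable ℝ ⇑φ := hφcd.differentiable one_ne_zero
  -- global bound on the derivative of the bump
  obtain ⟨Lr, hLrpos, hbound⟩ : ∃ L : ℝ, 0 < L ∧ ∀ x, ‖fderiv ℝ ⇑φ x‖ ≤ L := by
    obtain ⟨z, _, hz⟩ := (isCompact_closedBall c₀ (3*r/4)).exists_isMaxOn
      ⟨c₀, Metric.mem_closedBall_self (by positivity)⟩
      ((hφcd.continuous_fderiv one_ne_zero).norm.continuousOn :
        ContinuousOn (fun x => ‖fderiv ℝ ⇑φ x‖) _)
    refine ⟨‖fderiv ℝ ⇑φ z‖ + 1, by positivity, fun x => ?_⟩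
    by_cases hx : x ∈ Metric.closedBall c₀ (3*r/4)
    · have h1 : ‖fderiv ℝ ⇑φ x‖ ≤ ‖fderiv ℝ ⇑φ z‖ := hz hx
      linarith
    · have h0 : fderiv ℝ ⇑φ x = 0 := by
        by_contra hne
        have hmem : x ∈ tsupport ⇑φ :=
          support_fderiv_subset ℝ (by simpa [Function.mem_support] using hne)
        rw [φ.tsupport_eq] at hmem
        exact hx hmem
      rw [h0, norm_zero]
      positivity
  have hlip : ∀ x y : Eucl n, ‖φ y - φ x‖ ≤ Lr * ‖y - x‖ := fun x y =>
    Convex.norm_image_sub_le_of_norm_fderiv_le (fun w _ => hφdiff w)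
      (fun w _ => hbound w) convex_univ (mem_univ x) (mem_univ y)
  refine ⟨1 / (2 * Lr), by positivity, fun b hb => ?_⟩
  set v : Eucl n := b - c₀ with hv
  have hvn : ‖v‖ < 1 / (2 * Lr) := by rwa [hv, ← dist_eq_norm]
  have hk : Lr * ‖v‖ < 1/2 := by
    calc Lr * ‖v‖ < Lr * (1 / (2 * Lr)) := by
          exact mul_lt_mul_of_pos_left hvn hLrpos
      _ = 1/2 := by field_simp
  have hknn : (0:ℝ) ≤ Lr * ‖v‖ := by positivity
  set f : Eucl n → Eucl n := fun x => x + φ x • v with hf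
  set T : Eucl n → Eucl n → Eucl n := fun y x => y - φ x • v with hT
  have hTlip : ∀ y, LipschitzWith (Real.toNNReal (Lr * ‖v‖)) (T y) := by
    intro y
    refine LipschitzWith.of_dist_le_mul fun x x' => ?_
    rw [Real.coe_toNNReal _ hknn, dist_eq_norm, dist_eq_norm]
    have : T y x - T y x' = (φ x' - φ x) • v := by
      simp only [hT]
      module
    rw [this, norm_smul, Real.norm_eq_abs, ← Real.norm_eq_abs]
    calc ‖φ x' - φ x‖ * ‖v‖ ≤ (Lr * ‖x' - x‖) * ‖v‖ :=
          mul_le_mul_of_nonneg_right (hlip x x') (norm_nonneg v)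
      _ = Lr * ‖v‖ * ‖x - x'‖ := by rw [norm_sub_rev]; ring
  have hcontr : ∀ y, ContractingWith (Real.toNNReal (Lr * ‖v‖)) (T y) := by
    intro y
    refine ⟨?_, hTlip y⟩
    rw [← Real.toNNReal_one]
    exact (Real.toNNReal_lt_toNNReal_iff one_pos).mpr (hk.trans_le (by norm_num))
  set g : Eucl n → Eucl n := fun y => ContractingWith.fixedPoint (T y) (hcontr y) with hg
  have hgfix : ∀ y, T y (g y) = g y := fun y => (hcontr y).fixedPoint_isFixedPt
  have hright : ∀ y, f (g y) = y := by
    intro y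
    have h1 : y - φ (g y) • v = g y := hgfix y
    have h2 : y = g y + φ (g y) • v := sub_eq_iff_eq_add.mp h1
    exact h2.symm
  have hleft : ∀ x, g (f x) = x := by
    intro x
    have hx : Function.IsFixedPt (T (f x)) x := by
      show (x + φ x • v) - φ x • v = x
      abel
    exact ((hcontr (f x)).fixedPoint_unique hx).symm
  have hcdf : ContDiff ℝ 1 f := contDiff_id.add (hφcd.smul contDiff_const)
  -- the derivative of f and its invertibility
  have hA : ∀ a : Eucl n, HasFDerivAt f
      (ContinuousLinearMap.id ℝ (Eucl n) + (fderiv ℝ ⇑φ a).smulRight v) a := by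
    intro a
    exact (hasFDerivAt_id a).add ((hφdiff a).hasFDerivAt.smul_const v)
  have he : ∀ a : Eucl n, ∃ e : Eucl n ≃L[ℝ] Eucl n,
      (e : Eucl n →L[ℝ] Eucl n) = fderiv ℝ f a := by
    intro a
    set A : Eucl n →L[ℝ] Eucl n :=
      ContinuousLinearMap.id ℝ (Eucl n) + (fderiv ℝ ⇑φ a).smulRight v with hAdef
    have hlow : ∀ x : Eucl n, (1 - Lr * ‖v‖) * ‖x‖ ≤ ‖A x‖ := by
      intro x
      have h1 : ‖(fderiv ℝ ⇑φ a x) • v‖ ≤ (Lr * ‖v‖) * ‖x‖ := by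
        rw [norm_smul, Real.norm_eq_abs]
        calc |fderiv ℝ ⇑φ a x| * ‖v‖ ≤ (‖fderiv ℝ ⇑φ a‖ * ‖x‖) * ‖v‖ :=
              mul_le_mul_of_nonneg_right ((fderiv ℝ ⇑φ a).le_opNorm x) (norm_nonneg v)
          _ ≤ (Lr * ‖x‖) * ‖v‖ := by
              gcongr
              exact hbound a
          _ = (Lr * ‖v‖) * ‖x‖ := by ring
      have h2 : A x = x + (fderiv ℝ ⇑φ a x) • v := rfl
      have h3 : ‖x‖ ≤ ‖A x‖ + ‖(fderiv ℝ ⇑φ a x) • v‖ := by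
        calc ‖x‖ = ‖A x - (fderiv ℝ ⇑φ a x) • v‖ := by rw [h2]; congr 1; abel
          _ ≤ ‖A x‖ + ‖(fderiv ℝ ⇑φ a x) • v‖ := norm_sub_le _ _
      nlinarith [norm_nonneg x]
    have hinj : Function.Injective A := by
      intro x y hxy
      have h0 : A (x - y) = 0 := by rw [map_sub, hxy, sub_self]
      have h4 := hlow (x - y)
      rw [h0, norm_zero] at h4
      have h5 : ‖x - y‖ ≤ 0 := by
        by_contra hpos
        push_neg at hpos
        nlinarith [mul_pos (show (0:ℝ) < 1 - Lr * ‖v‖ by linarith) hpos]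
      exact sub_eq_zero.mp (norm_le_zero_iff.mp h5)
    have hker : A.ker = ⊥ := LinearMap.ker_eq_bot.mpr hinj
    have hsurj : Function.Surjective A :=
      LinearMap.injective_iff_surjective (f := (A : Eucl n →ₗ[ℝ] Eucl n)) |>.mp hinj
    have hrange : A.range = ⊤ := LinearMap.range_eq_top.mpr hsurj
    refine ⟨ContinuousLinearEquiv.ofBijective A hker hrange, ?_⟩
    rw [ContinuousLinearEquiv.coe_ofBijective]
    exact ((hA a).fderiv).symm
  have hcdg : ContDiff ℝ 1 g := contDiff_of_inverse hleft hright hcdf he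
  refine ⟨f, g, ⟨hleft, hright, hcdf, hcdg, Metric.closedBall c₀ (3*r/4),
    isCompact_closedBall _ _,
    (Metric.closedBall_subset_ball (by linarith)).trans hball, ?_⟩, ?_⟩
  · intro x hx
    have h0 : φ x = 0 := φ.zero_of_le_dist (le_of_lt (lt_of_not_ge (fun hcon => hx
      (Metric.mem_closedBall.mpr hcon))))
    simp [hf, h0]
  · have h1 : φ c₀ = 1 := φ.one_of_mem_closedBall (Metric.mem_closedBall_self (by positivity))
    simp only [hf, h1, one_smul, hv]
    abel

/-- Any point of a connected open set can be reached from any other by a good map. -/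
theorem reach {D₀ : Set (Eucl n)} (hD₀ : IsOpen D₀) (hD₀c : IsConnected D₀)
    {a₀ a₀' : Eucl n} (ha₀ : a₀ ∈ D₀) (ha₀' : a₀' ∈ D₀) :
    ∃ f g, Good D₀ f g ∧ f a₀ = a₀' := by
  classical
  set S : Set (Eucl n) := {b | b ∈ D₀ ∧ ∃ f g, Good D₀ f g ∧ f a₀ = b} with hS
  have hmove : ∀ b ∈ D₀, ∃ δ > (0:ℝ), Metric.ball b δ ⊆ D₀ ∧
      ∀ b' ∈ Metric.ball b δ, ∃ f g, Good D₀ f g ∧ f b = b' := by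
    intro b hb
    obtain ⟨r, hr, hball⟩ := Metric.isOpen_iff.mp hD₀ b hb
    obtain ⟨δ₀, hδ₀, hδ⟩ := basic_move b hr hball
    refine ⟨min δ₀ r, lt_min hδ₀ hr,
      (Metric.ball_subset_ball (min_le_right _ _)).trans hball, fun b' hb' => ?_⟩
    exact hδ b' (lt_of_lt_of_le (Metric.mem_ball.mp hb') (min_le_left _ _))
  have hSopen : IsOpen S := by
    rw [Metric.isOpen_iff]
    rintro b ⟨hbD, f, g, hfg, hfa⟩
    obtain ⟨δ, hδpos, hballD, hmv⟩ := hmove b hbD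
    refine ⟨δ, hδpos, fun b' hb' => ?_⟩
    obtain ⟨f', g', hfg', hfb⟩ := hmv b' hb'
    exact ⟨hballD hb', f' ∘ f, g ∘ g', hfg.comp hfg',
      by simp only [Function.comp_apply, hfa, hfb]⟩
  have hclosure : ∀ b ∈ D₀, b ∈ closure S → b ∈ S := by
    intro b hbD hbc
    obtain ⟨δ, hδpos, hballD, hmv⟩ := hmove b hbD
    obtain ⟨x, hxS, hxd⟩ := Metric.mem_closure_iff.mp hbc δ hδpos
    obtain ⟨f', g', hfg', hfb⟩ := hmv x (Metric.mem_ball.mpr (by rwa [dist_comm]))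
    obtain ⟨hxD, f, g, hfg, hfa⟩ := hxS
    have hgx : g' x = b := by rw [← hfb]; exact hfg'.left b
    exact ⟨hbD, g' ∘ f, g ∘ f', hfg.comp hfg'.symm,
      by simp only [Function.comp_apply, hfa, hgx]⟩
  by_cases hfin : a₀' ∈ S
  · exact hfin.2
  exfalso
  have haS : a₀ ∈ S := ⟨ha₀, id, id, Good.id_good D₀, rfl⟩
  have hcover : D₀ ⊆ S ∪ (closure S)ᶜ := by
    intro b hb
    by_cases hbc : b ∈ closure S
    · exact Or.inl (hclosure b hb hbc)
    · exact Or.inr hbc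
  obtain ⟨w, _, hwS, hwc⟩ := hD₀c.isPreconnected S (closure S)ᶜ hSopen
    isClosed_closure.isOpen_compl hcover ⟨a₀, ha₀, haS⟩
    ⟨a₀', ha₀', fun hc => hfin (hclosure _ ha₀' hc)⟩
  exact hwc (subset_closure hwS)

end CtrlHomeo

end

/-- Moving a point by a controlled homeomorphism: given a subdomain `D₀ ⊆ D` containing
`a₀` and `a₀'`, there exist a homeomorphism `f` of `closure D` onto itself (with inverse
`g`) and a constant `K > 0` such that `f(a₀) = a₀'`, `f = id` off `D₀`, and
`M_p(f(Γ)) ≤ K · M_p(Γ)` for every family `Γ` of paths in `D`. -/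
theorem exists_controlled_homeo_moving_point {n : ℕ} (hn : 2 ≤ n) (p : ℝ) (hp : 1 ≤ p)
    (D : Set (Eucl n)) (hD : IsOpen D) (hDc : IsConnected D)
    (D₀ : Set (Eucl n)) (hD₀ : IsOpen D₀) (hD₀c : IsConnected D₀) (hD₀D : D₀ ⊆ D)
    (a₀ a₀' : Eucl n) (ha₀ : a₀ ∈ D₀) (ha₀' : a₀' ∈ D₀) :
    ∃ (f g : Eucl n → Eucl n) (K : ℝ), 0 < K ∧
      ContinuousOn f (closure D) ∧ ContinuousOn g (closure D) ∧
      f '' closure D = closure D ∧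
      (∀ x ∈ closure D, g (f x) = x) ∧ (∀ x ∈ closure D, f (g x) = x) ∧
      f a₀ = a₀' ∧
      (∀ x ∈ closure D \ D₀, f x = x) ∧
      ∀ Γ : Set (ℝ → Eucl n), (∀ γ ∈ Γ, ∀ t ∈ Icc (0:ℝ) 1, γ t ∈ D) →
        pModulus p ((fun γ => f ∘ γ) '' Γ) ≤ ENNReal.ofReal K * pModulus p Γ := by
  obtain ⟨f, g, hG, hfa⟩ := CtrlHomeo.reach hD₀ hD₀c ha₀ ha₀'
  obtain ⟨K, hK, hmod⟩ := hG.modulus_le p hp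
  obtain ⟨Ks, hKc, hKD, hKf⟩ := hG.supp
  have hgid : ∀ x ∉ Ks, g x = x := fun x hx => hG.g_eq_of_not_mem hKf hx
  have himg : f '' closure D = closure D := by
    apply Subset.antisymm
    · rintro y ⟨x, hx, rfl⟩
      by_cases hxK : x ∈ Ks
      · exact subset_closure (hD₀D (hKD (hG.mapsK hKf x hxK)))
      · rwa [hKf x hxK]
    · intro y hy
      by_cases hyK : y ∈ Ks
      · exact ⟨g y, subset_closure (hD₀D (hKD (hG.symm.mapsK hgid y hyK))), hG.right y⟩
      · exact ⟨y, hy, hKf y hyK⟩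
  exact ⟨f, g, K, hK, (hG.cdf.continuous).continuousOn, (hG.cdg.continuous).continuousOn,
    himg, fun x _ => hG.left x, fun x _ => hG.right x, hfa,
    fun x hx => hKf x (fun hc => hx.2 (hKD hc)), fun Γ _ => hmod Γ⟩
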